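/- Let f(x) = Σ_{m≥0} B_m χ(m,x) be a measure-preserving 1-Lipschitz function ℤ_p → ℤ_p. Then B_0, …, B_{p−1} are pairwise distinct modulo p, and |B_m|_p = |q(m)|_p = p^{−⌊log_p m⌋} for all m ≥ p. -/

import Mathlib

open MeasureTheory Finset

namespace VDP

noncomputable instance (p : ℕ) [Fact p.Prime] : MeasurableSpace ℤ_[p] := borel _
instance (p : ℕ) [Fact p.Prime] : BorelSpace ℤ_[p] := ⟨rfl⟩

/-- The Haar probability measure on `ℤ_[p]`. -/
noncomputable def haarZp (p : ℕ) [Fact p.Prime] : Measure ℤ_[p] :=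
  Measure.addHaarMeasure ⊤

/-- `f` is 1-Lipschitz. -/
def IsLip (p : ℕ) [Fact p.Prime] (f : ℤ_[p] → ℤ_[p]) : Prop :=
  ∀ x y : ℤ_[p], ‖f x - f y‖ ≤ ‖x - y‖

/-- The van der Put basis function `χ(m, x)` on `ℤ_[p]` (with `⌊log_p 0⌋ = 0`). -/
noncomputable def chi (p : ℕ) [Fact p.Prime] (m : ℕ) (x : ℤ_[p]) : ℤ_[p] :=
  if ‖x - (m : ℤ_[p])‖ ≤ ((p : ℝ) ^ (Nat.log p m + 1))⁻¹ then 1 else 0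

/-- `q(m) = m_s p^s`, the leading term of the `p`-adic expansion of `m`. -/
def q (p m : ℕ) : ℕ := m / p ^ Nat.log p m * p ^ Nat.log p m

/-- `f` has van der Put expansion with coefficients `B`. -/
def vdpExpansion (p : ℕ) [Fact p.Prime] (f : ℤ_[p] → ℤ_[p]) (B : ℕ → ℤ_[p]) : Prop :=
  ∀ x, f x = ∑' m, B m * chi p m x

/-- `f` is bijective modulo `p^n`. -/
def BijModPow (p : ℕ) [Fact p.Prime] (f : ℤ_[p] → ℤ_[p]) (n : ℕ) : Prop :=
  Function.Bijective fun a : ZMod (p ^ n) => PadicInt.toZModPow n (f ((a.val : ℕ) : ℤ_[p]))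

/-- `f` is transitive modulo `p^n`. -/
def TransModPow (p : ℕ) [Fact p.Prime] (f : ℤ_[p] → ℤ_[p]) (n : ℕ) : Prop :=
  ∀ x : ℤ_[p], ∀ a : ZMod (p ^ n), ∃ k : ℕ, PadicInt.toZModPow n (f^[k] x) = a

/-- The `i`-th digit of the canonical `p`-adic expansion of `x`. -/
noncomputable def digit (p : ℕ) [Fact p.Prime] (x : ℤ_[p]) (i : ℕ) : ℕ :=
  x.appr (i + 1) / p ^ i % p

end VDP

open VDP

namespace VDPAux

variable {p : ℕ} [hp : Fact p.Prime]

instance : (haarZp p).IsAddHaarMeasure := by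
  unfold haarZp; infer_instance

lemma eqiff (n : ℕ) (x y : ℤ_[p]) :
    PadicInt.toZModPow n x = PadicInt.toZModPow n y ↔ ‖x - y‖ ≤ (p : ℝ) ^ (-(n : ℤ)) := by
  rw [PadicInt.norm_le_pow_iff_mem_span_pow, ← PadicInt.ker_toZModPow, RingHom.mem_ker,
    map_sub, sub_eq_zero]

lemma ball_measure (c : ℤ_[p]) (r : ℝ) :
    haarZp p (Metric.closedBall c r) = haarZp p (Metric.closedBall (0 : ℤ_[p]) r) := by
  have h : (fun z : ℤ_[p] => -c + z) ⁻¹' Metric.closedBall 0 r = Metric.closedBall c r := by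
    ext z
    simp [Metric.mem_closedBall, dist_eq_norm, neg_add_eq_sub]
  rw [← h, measure_preimage_add]

lemma injmod (f : ℤ_[p] → ℤ_[p]) (hf : IsLip p f)
    (hmp : MeasurePreserving f (haarZp p) (haarZp p)) (n : ℕ) (x y : ℤ_[p])
    (h : PadicInt.toZModPow n (f x) = PadicInt.toZModPow n (f y)) :
    PadicInt.toZModPow n x = PadicInt.toZModPow n y := by
  by_contra hxy
  set r : ℝ := (p : ℝ) ^ (-(n : ℤ)) with hr
  have hppos : (0:ℝ) < p := by exact_mod_cast hp.out.pos
  have hrpos : 0 < r := by positivity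
  set μ := haarZp p with hμ
  set S := Metric.closedBall (f x) r with hS
  have hSmeas : MeasurableSet S := measurableSet_closedBall
  have hsub1 : Metric.closedBall x r ⊆ f ⁻¹' S := by
    intro z hz
    simp only [hS, Set.mem_preimage, Metric.mem_closedBall, dist_eq_norm] at *
    exact le_trans (hf z x) hz
  have hfxy : ‖f y - f x‖ ≤ r := (eqiff n (f y) (f x)).mp h.symm
  have hsub2 : Metric.closedBall y r ⊆ f ⁻¹' S := by
    intro z hz
    simp only [hS, Set.mem_preimage, Metric.mem_closedBall, dist_eq_norm] at *
    calc ‖f z - f x‖ = ‖(f z - f y) + (f y - f x)‖ := by ring_nf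
    _ ≤ max ‖f z - f y‖ ‖f y - f x‖ := PadicInt.nonarchimedean _ _
    _ ≤ r := max_le (le_trans (hf z y) hz) hfxy
  have hdisj : Disjoint (Metric.closedBall x r) (Metric.closedBall y r) := by
    rw [Set.disjoint_left]
    intro z hz1 hz2
    apply hxy
    rw [eqiff]
    simp only [Metric.mem_closedBall, dist_eq_norm] at hz1 hz2
    calc ‖x - y‖ = ‖-(z - x) + (z - y)‖ := by ring_nf
    _ ≤ max ‖-(z - x)‖ ‖z - y‖ := PadicInt.nonarchimedean _ _
    _ ≤ r := max_le (by rwa [norm_neg]) hz2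
  have hμ1 : μ (Metric.closedBall x r) = μ S := (ball_measure x r).trans (ball_measure (f x) r).symm
  have hμ2 : μ (Metric.closedBall y r) = μ S := (ball_measure y r).trans (ball_measure (f x) r).symm
  have hle : μ S + μ S ≤ μ S := by
    have h1 : μ (Metric.closedBall x r ∪ Metric.closedBall y r) = μ S + μ S := by
      rw [measure_union hdisj measurableSet_closedBall, hμ1, hμ2]
    rw [← h1, ← hmp.measure_preimage hSmeas.nullMeasurableSet]
    exact measure_mono (Set.union_subset hsub1 hsub2)
  have hpos : 0 < μ S :=
    lt_of_lt_of_le (Metric.measure_ball_pos μ (f x) hrpos) (measure_mono Metric.ball_subset_closedBall)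
  have hfin : μ S ≠ ⊤ := (isCompact_closedBall (f x) r).measure_lt_top.ne
  have h0 : μ S ≤ 0 := (ENNReal.add_le_add_iff_left hfin).mp (by simpa using hle)
  exact hpos.ne' (le_antisymm h0 zero_le)

lemma isom (f : ℤ_[p] → ℤ_[p]) (hf : IsLip p f)
    (hmp : MeasurePreserving f (haarZp p) (haarZp p)) (x y : ℤ_[p]) :
    ‖f x - f y‖ = ‖x - y‖ := by
  rcases eq_or_ne x y with rfl | hne
  · simp
  refine le_antisymm (hf x y) ?_
  have hxy0 : x - y ≠ 0 := sub_ne_zero.mpr hne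
  obtain ⟨k, hk⟩ : ∃ k : ℕ, (x - y).valuation = (k : ℤ) :=
    ⟨(x - y).valuation, rfl⟩
  have hnorm : ‖x - y‖ = (p : ℝ) ^ (-(k : ℤ)) := by
    rw [PadicInt.norm_eq_zpow_neg_valuation hxy0, hk]
  by_contra hlt
  push_neg at hlt
  rw [hnorm] at hlt
  have h1 : ‖f x - f y‖ ≤ (p : ℝ) ^ (-((k + 1 : ℕ) : ℤ)) := by
    rw [PadicInt.norm_le_pow_iff_norm_lt_pow_add_one]
    convert hlt using 2
    · exact rfl
    push_cast; ring
  have h2 := injmod f hf hmp (k + 1) x y ((eqiff _ _ _).mpr h1)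
  have h3 := (eqiff (k + 1) x y).mp h2
  rw [hnorm] at h3
  have hplt : (1 : ℝ) < p := by exact_mod_cast hp.out.one_lt
  exact absurd h3 (not_le.mpr (zpow_lt_zpow_right₀ hplt (by push_cast; omega)))

lemma chi_nat (j N : ℕ) :
    chi p j (N : ℤ_[p]) =
      if ((p : ℤ) ^ (Nat.log p j + 1)) ∣ ((N : ℤ) - (j : ℤ)) then 1 else 0 := by
  unfold chi
  have h1 : ((N : ℤ_[p]) - (j : ℕ)) = (((N - (j:ℤ) : ℤ)) : ℤ_[p]) := by push_cast; ring
  have hiff : (‖(N : ℤ_[p]) - ((j : ℕ) : ℤ_[p])‖ ≤ ((p : ℝ) ^ (Nat.log p j + 1))⁻¹) ↔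
      ((p : ℤ) ^ (Nat.log p j + 1)) ∣ ((N : ℤ) - (j : ℤ)) := by
    rw [h1, show ((p : ℝ) ^ (Nat.log p j + 1))⁻¹ = (p : ℝ) ^ (-(Nat.log p j + 1 : ℕ) : ℤ) by
      rw [zpow_neg, zpow_natCast],
      PadicInt.norm_int_le_pow_iff_dvd]
  exact if_congr hiff rfl rfl

lemma chi_gt (j N : ℕ) (h : N < j) : chi p j (N : ℤ_[p]) = 0 := by
  rw [chi_nat, if_neg]
  intro hdvd
  have hj0 : j ≠ 0 := by omega
  have hjlt : j < p ^ (Nat.log p j + 1) := Nat.lt_pow_succ_log_self hp.out.one_lt j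
  have hdvd' : ((p : ℤ) ^ (Nat.log p j + 1)) ∣ ((j : ℤ) - N) := by
    have := hdvd.neg_right
    simpa using this
  have hle := Int.le_of_dvd (by omega) hdvd'
  have hcast : ((p : ℤ) ^ (Nat.log p j + 1)) = ((p ^ (Nat.log p j + 1) : ℕ) : ℤ) := by push_cast; ring
  omega

lemma eval (f : ℤ_[p] → ℤ_[p]) (B : ℕ → ℤ_[p]) (hB : vdpExpansion p f B)
    (N M : ℕ) (h : N ≤ M) :
    f (N : ℤ_[p]) = ∑ j ∈ Finset.range (M + 1), B j * chi p j (N : ℤ_[p]) := by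
  rw [hB]
  apply tsum_eq_sum
  intro j hj
  rw [chi_gt j N (by simp only [Finset.mem_range] at hj; omega), mul_zero]


lemma int_pow_dvd_nat (n a b : ℕ) (hba : b ≤ a) (hdvd : ((p : ℤ)) ^ n ∣ (a : ℤ) - b) :
    (p ^ n : ℕ) ∣ a - b := by
  have h1 : ((p : ℤ)) ^ n = ((p ^ n : ℕ) : ℤ) := by push_cast; ring
  rw [h1, show ((a : ℤ) - b) = ((a - b : ℕ) : ℤ) by rw [Nat.cast_sub hba]] at hdvd
  exact_mod_cast hdvd

lemma chi_self (N : ℕ) : chi p N (N : ℤ_[p]) = 1 := by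
  rw [chi_nat, if_pos (by simp)]

lemma chi_eq (m j : ℕ) (hm : p ≤ m) (hj : j < m) :
    chi p j ((m : ℕ) : ℤ_[p]) = chi p j ((m % p ^ Nat.log p m : ℕ) : ℤ_[p]) := by
  have hp1 : 1 < p := hp.out.one_lt
  set s := Nat.log p m with hs
  set t := Nat.log p j with ht
  have hs1 : 1 ≤ s := Nat.log_pos hp1 hm
  have hmod : m % p ^ s < p ^ s := Nat.mod_lt _ (Nat.pow_pos hp.out.pos)
  rw [chi_nat, chi_nat]
  rcases lt_or_ge t s with hts | hts
  · -- t + 1 ≤ s : both conditions equivalent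
    have hd1 : ((p : ℤ) ^ (t + 1)) ∣ ((m : ℤ) - (m % p ^ s : ℕ)) := by
      have hN : m - m % p ^ s = p ^ s * (m / p ^ s) := by
        have := Nat.div_add_mod m (p ^ s); omega
      have hkey : (m : ℤ) - (m % p ^ s : ℕ) = ((p ^ s * (m / p ^ s) : ℕ) : ℤ) := by
        rw [← Nat.cast_sub (Nat.mod_le m _), hN]
      rw [hkey]
      have h2 : ((p : ℤ) ^ (t + 1)) ∣ ((p : ℤ) ^ s) := pow_dvd_pow _ (by omega)
      refine h2.trans ?_
      push_cast
      exact dvd_mul_right _ _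
    refine if_congr ⟨fun h => ?_, fun h => ?_⟩ rfl rfl
    · have := dvd_sub h hd1
      have heq : (m : ℤ) - j - ((m : ℤ) - (m % p ^ s : ℕ)) = ((m % p ^ s : ℕ) : ℤ) - j := by ring
      rwa [heq] at this
    · have := dvd_add h hd1
      have heq : ((m % p ^ s : ℕ) : ℤ) - j + ((m : ℤ) - (m % p ^ s : ℕ)) = (m : ℤ) - j := by ring
      rwa [heq] at this
  · -- t = s : both conditions false
    have hjm : t ≤ s := by rw [ht, hs]; exact Nat.log_mono_right hj.le
    have hts' : t = s := le_antisymm hjm hts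
    have hj0 : j ≠ 0 := by
      rintro rfl
      rw [ht] at hts'
      simp [Nat.log_zero_right] at hts'
      omega
    have hjge : p ^ s ≤ j := by rw [← hts']; exact Nat.pow_log_le_self p hj0
    have hjlt : j < p ^ (t + 1) := Nat.lt_pow_succ_log_self hp1 j
    have hmlt : m < p ^ (s + 1) := Nat.lt_pow_succ_log_self hp1 m
    have hcast : ((p : ℤ) ^ (t + 1)) = ((p ^ (t + 1) : ℕ) : ℤ) := by push_cast; ring
    rw [if_neg, if_neg]
    · intro hdvd
      rw [← ht, hts'] at hdvd
      have hdvd' : ((p : ℤ) ^ (s + 1)) ∣ ((j : ℤ) - (m % p ^ s : ℕ)) := by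
        have := hdvd.neg_right; simpa using this
      have hnat := int_pow_dvd_nat (s + 1) j (m % p ^ s) (by omega) hdvd'
      have hle := Nat.le_of_dvd (by omega) hnat
      rw [hts'] at hjlt
      clear hdvd hdvd' hnat
      generalize m % p ^ s = e at *
      omega
    · intro hdvd
      rw [← ht, hts'] at hdvd
      have hnat := int_pow_dvd_nat (s + 1) m j (by omega) hdvd
      have hle := Nat.le_of_dvd (by omega) hnat
      clear hdvd hnat
      omega

lemma chi_self_mod (m : ℕ) (hm : p ≤ m) :
    chi p m ((m % p ^ Nat.log p m : ℕ) : ℤ_[p]) = 0 := by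
  have hp1 : 1 < p := hp.out.one_lt
  set s := Nat.log p m with hs
  have hmod : m % p ^ s < p ^ s := Nat.mod_lt _ (Nat.pow_pos hp.out.pos)
  have hple : p ^ s ≤ m := Nat.pow_log_le_self p (by omega)
  have hmlt : m < p ^ (s + 1) := Nat.lt_pow_succ_log_self hp1 m
  rw [chi_nat, if_neg]
  intro hdvd
  have hdvd' : ((p : ℤ) ^ (s + 1)) ∣ ((m : ℤ) - (m % p ^ s : ℕ)) := by
    have := hdvd.neg_right; simpa using this
  have hnat := int_pow_dvd_nat (s + 1) m (m % p ^ s) (Nat.mod_le _ _) hdvd'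
  have hle := Nat.le_of_dvd (by omega) hnat
  clear hdvd hdvd' hnat
  generalize m % p ^ s = e at *
  omega

lemma coeff_lt (f : ℤ_[p] → ℤ_[p]) (B : ℕ → ℤ_[p]) (hB : vdpExpansion p f B)
    (i : ℕ) (hi : i < p) : B i = f (i : ℤ_[p]) := by
  have hp1 : 1 < p := hp.out.one_lt
  rw [eval f B hB i i le_rfl]
  rw [Finset.sum_eq_single_of_mem i (Finset.self_mem_range_succ i)]
  · rw [chi_self, mul_one]
  · intro j hjmem hne
    have hj : j < i := by simp only [Finset.mem_range] at hjmem; omega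
    have ht : Nat.log p j = 0 := Nat.log_eq_zero_iff.mpr (Or.inl (by omega))
    rw [chi_nat, ht, if_neg, mul_zero]
    intro hdvd
    have hnat := int_pow_dvd_nat (0 + 1) i j (by omega) hdvd
    have hle := Nat.le_of_dvd (by omega) hnat
    have hpow : p ^ (0 + 1) = p := by ring
    clear hdvd hnat
    omega

lemma coeff_ge (f : ℤ_[p] → ℤ_[p]) (B : ℕ → ℤ_[p]) (hB : vdpExpansion p f B)
    (m : ℕ) (hm : p ≤ m) :
    B m = f (m : ℤ_[p]) - f ((m % p ^ Nat.log p m : ℕ) : ℤ_[p]) := by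
  have hmod : m % p ^ Nat.log p m ≤ m := Nat.mod_le _ _
  rw [eval f B hB m m le_rfl, eval f B hB (m % p ^ Nat.log p m) m hmod,
    ← Finset.sum_sub_distrib]
  rw [Finset.sum_eq_single_of_mem m (Finset.self_mem_range_succ m)]
  · rw [chi_self, chi_self_mod m hm, mul_one, mul_zero, sub_zero]
  · intro j hjmem hne
    have hj : j < m := by simp only [Finset.mem_range] at hjmem; omega
    rw [chi_eq m j hm hj, sub_self]

end VDPAux

open VDP MeasureTheory in
theorem stmt6 (p : ℕ) [Fact p.Prime] (f : ℤ_[p] → ℤ_[p]) (B : ℕ → ℤ_[p])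
    (hf : IsLip p f) (hB : vdpExpansion p f B)
    (hmp : MeasurePreserving f (haarZp p) (haarZp p)) :
    (∀ i j : ℕ, i < p → j < p → i ≠ j → ¬ (p : ℤ_[p]) ∣ (B i - B j)) ∧
      (∀ m : ℕ, p ≤ m →
        ‖B m‖ = ‖((q p m : ℕ) : ℤ_[p])‖ ∧ ‖B m‖ = ((p : ℝ) ^ Nat.log p m)⁻¹) := by
  have hp1 : 1 < p := Nat.Prime.one_lt Fact.out
  constructor
  · intro i j hi hj hij
    have hBi := VDPAux.coeff_lt f B hB i hi
    have hBj := VDPAux.coeff_lt f B hB j hj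
    have hnorm : ‖B i - B j‖ = 1 := by
      rw [hBi, hBj, VDPAux.isom f hf hmp]
      have hcast : ((i : ℤ_[p]) - (j : ℤ_[p])) = ((((i : ℤ) - (j : ℤ) : ℤ)) : ℤ_[p]) := by
        push_cast; ring
      rw [hcast]
      refine le_antisymm (PadicInt.norm_le_one _) ?_
      by_contra hlt
      push_neg at hlt
      have hdvd := (PadicInt.norm_int_lt_one_iff_dvd _).mp hlt
      rcases Nat.lt_or_ge i j with hc | hc
      · have hdvd' : (p : ℤ) ∣ ((j : ℤ) - i) := by
          have := hdvd.neg_right; simpa using this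
        have := Int.le_of_dvd (by omega) hdvd'
        omega
      · have := Int.le_of_dvd (by omega) hdvd
        omega
    intro hcon
    rw [← PadicInt.norm_lt_one_iff_dvd, hnorm] at hcon
    exact lt_irrefl 1 hcon
  · intro m hm
    set s := Nat.log p m with hs
    have hBm := VDPAux.coeff_ge f B hB m hm
    have hmodle : m % p ^ s ≤ m := Nat.mod_le _ _
    have hq : q p m = m - m % p ^ s := by
      have h := Nat.div_add_mod m (p ^ s)
      rw [Nat.mul_comm] at h
      unfold q
      rw [← hs]
      omega
    have hnorm1 : ‖B m‖ = ‖((q p m : ℕ) : ℤ_[p])‖ := by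
      rw [hBm, VDPAux.isom f hf hmp, hq]
      congr 1
      rw [Nat.cast_sub hmodle]
    have hple : p ^ s ≤ m := Nat.pow_log_le_self p (by omega)
    have hmlt : m < p ^ (s + 1) := Nat.lt_pow_succ_log_self hp1 m
    have hpspos : 0 < p ^ s := Nat.pow_pos (by omega)
    obtain ⟨d, hd1, hdp, hdq⟩ : ∃ d : ℕ, 1 ≤ d ∧ d < p ∧ q p m = d * p ^ s := by
      refine ⟨m / p ^ s, (Nat.one_le_div_iff hpspos).mpr hple, ?_, ?_⟩
      · rw [Nat.div_lt_iff_lt_mul hpspos]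
        calc m < p ^ (s + 1) := hmlt
        _ = p * p ^ s := by ring
      · unfold q
        rw [← hs]
    have hqd : ((q p m : ℕ) : ℤ_[p]) = ((d : ℕ) : ℤ_[p]) * ((p : ℤ_[p])) ^ s := by
      rw [hdq]
      push_cast
      ring
    have hdnorm : ‖((d : ℕ) : ℤ_[p])‖ = 1 := by
      refine le_antisymm (PadicInt.norm_le_one _) ?_
      by_contra hlt
      push_neg at hlt
      have hcast : ((d : ℕ) : ℤ_[p]) = (((d : ℤ)) : ℤ_[p]) := by push_cast; ring
      rw [hcast] at hlt
      have hdvd := (PadicInt.norm_int_lt_one_iff_dvd _).mp hlt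
      have hdvd' : p ∣ d := by exact_mod_cast hdvd
      have := Nat.le_of_dvd (by omega) hdvd'
      omega
    have hnorm2 : ‖((q p m : ℕ) : ℤ_[p])‖ = ((p : ℝ) ^ s)⁻¹ := by
      rw [hqd, norm_mul, hdnorm, one_mul, PadicInt.norm_p_pow, zpow_neg, zpow_natCast]
    exact ⟨hnorm1, hnorm1.trans hnorm2⟩
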